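/- Let T be a tree, let w : V(T) → ℕ with w(V(T)) > 0, and let w_max = max{w(u) : u ∈ V(T)}. Call a nonnegative integer W nice if there is a nonempty set S of vertices of T such that T[S] is connected, W ≤ w(S) ≤ W + w_max, and w(D) ≤ W for every connected component D of T − S. Let W_min be the smallest nice nonnegative integer (it exists, since W = w(V(T)) is nice). Then W_min ≤ cs(T,w) ≤ W_min + w_max ≤ 2·cs(T,w). -/
import Mathlib


/-- Total weight of a set of vertices. -/
noncomputable def setWeight {V : Type*} (w : V → ℕ) (A : Set V) : ℕ := ∑ᶠ u ∈ A, w u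

/-- `C` is the vertex set of a connected component of the subgraph of `G` induced by `S`. -/
def IsCompOf {V : Type*} (G : SimpleGraph V) (S C : Set V) : Prop :=
  C ⊆ S ∧ (G.induce C).Connected ∧ ∀ u ∈ C, ∀ v ∈ S, G.Adj u v → v ∈ C

/-- `S` is a (nonempty) `w`-safe set of `G`. -/
def IsSafeSet {V : Type*} (G : SimpleGraph V) (w : V → ℕ) (S : Set V) : Prop :=
  S.Nonempty ∧ ∀ C D : Set V, IsCompOf G S C → IsCompOf G Sᶜ D →
    (∃ u ∈ C, ∃ v ∈ D, G.Adj u v) → setWeight w D ≤ setWeight w C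

/-- The connected safe number `cs(G,w)`. -/
noncomputable def connSafeNum {V : Type*} (G : SimpleGraph V) (w : V → ℕ) : ℕ :=
  sInf {m | ∃ S : Set V, IsSafeSet G w S ∧ (G.induce S).Connected ∧ setWeight w S = m}

set_option linter.unusedSectionVars false
section aux
variable {V : Type*} [Fintype V] {G : SimpleGraph V}

lemma setWeight_eq_sum (w : V → ℕ) (A : Set V) :
    setWeight w A = ∑ u ∈ A.toFinite.toFinset, w u := by
  rw [setWeight, ← finsum_mem_coe_finset, Set.Finite.coe_toFinset]

lemma setWeight_mono (w : V → ℕ) {A B : Set V} (h : A ⊆ B) :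
    setWeight w A ≤ setWeight w B := by
  rw [setWeight_eq_sum, setWeight_eq_sum]
  exact Finset.sum_le_sum_of_subset (Set.Finite.toFinset_subset_toFinset.2 h)

lemma le_setWeight (w : V → ℕ) {A : Set V} {u : V} (hu : u ∈ A) : w u ≤ setWeight w A := by
  rw [setWeight_eq_sum]
  exact Finset.single_le_sum (fun _ _ => Nat.zero_le _) (by simpa using hu)

/-- The vertex set of the component of `G[X]` containing `u`. -/
def comp (G : SimpleGraph V) (X : Set V) (u : V) : Set V :=
  {v | ∃ (hu : u ∈ X) (hv : v ∈ X), (G.induce X).Reachable ⟨u, hu⟩ ⟨v, hv⟩}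

lemma comp_self {X : Set V} {u : V} (hu : u ∈ X) : u ∈ comp G X u := ⟨hu, hu, .refl _⟩

lemma comp_subset {X : Set V} {u : V} : comp G X u ⊆ X := fun _ hv => hv.2.1

lemma comp_closed {X : Set V} {u : V} {a b : V} (ha : a ∈ comp G X u) (hb : b ∈ X)
    (hab : G.Adj a b) : b ∈ comp G X u := by
  obtain ⟨hu, haX, hr⟩ := ha
  exact ⟨hu, hb, hr.trans (SimpleGraph.Adj.reachable (by simpa using hab))⟩

lemma comp_reach {X : Set V} {u : V} (hu : u ∈ X) :
    ∀ v (hv : v ∈ comp G X u),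
      (G.induce (comp G X u)).Reachable ⟨u, comp_self hu⟩ ⟨v, hv⟩ := by
  have key : ∀ (a b : X) (p : (G.induce X).Walk a b) (ha : a.1 ∈ comp G X u),
      ∃ hb : b.1 ∈ comp G X u,
        (G.induce (comp G X u)).Reachable ⟨a.1, ha⟩ ⟨b.1, hb⟩ := by
    intro a b p
    induction p with
    | nil => exact fun ha => ⟨ha, .refl _⟩
    | @cons a x b h p ih =>
        intro ha
        have hadj : G.Adj a.1 x.1 := by simpa using h
        have hx : x.1 ∈ comp G X u := comp_closed ha x.2 hadj
        obtain ⟨hb, hr⟩ := ih hx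
        exact ⟨hb, (SimpleGraph.Adj.reachable (by simpa using hadj)).trans hr⟩
  intro v hv
  obtain ⟨hu', hvX, hr⟩ := hv
  obtain ⟨p⟩ := hr
  obtain ⟨hb, hr⟩ := key _ _ p (comp_self hu)
  exact hr

lemma comp_isCompOf {X : Set V} {u : V} (hu : u ∈ X) : IsCompOf G X (comp G X u) := by
  haveI : Nonempty (comp G X u) := ⟨⟨u, comp_self hu⟩⟩
  exact ⟨comp_subset, ⟨fun a b => ((comp_reach hu a.1 a.2).symm).trans (comp_reach hu b.1 b.2)⟩,
    fun a ha b hb hab => comp_closed ha hb hab⟩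

/-- If `G[S]` is connected then its only component is `S` itself. -/
lemma isCompOf_eq_self {S C : Set V} (hS : (G.induce S).Connected) (hC : IsCompOf G S C) :
    C = S := by
  obtain ⟨hCS, hCconn, hclosed⟩ := hC
  refine Set.Subset.antisymm hCS fun v hv => ?_
  obtain ⟨⟨u, hu⟩⟩ := hCconn.nonempty
  have key : ∀ (a b : S) (p : (G.induce S).Walk a b), a.1 ∈ C → b.1 ∈ C := by
    intro a b p
    induction p with
    | nil => exact id
    | @cons a x b h p ih =>
        intro ha
        exact ih (hclosed _ ha _ x.2 (by simpa using h))
  obtain ⟨p⟩ := hS.preconnected ⟨u, hCS hu⟩ ⟨v, hv⟩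
  exact key _ _ p hu

/-- A crossing edge from a component of the complement to `S`. -/
lemma exists_crossing (hG : G.Connected) {S D : Set V} (hD : IsCompOf G Sᶜ D)
    {u : V} (hu : u ∈ D) {v : V} (hv : v ∈ S) :
    ∃ a ∈ D, ∃ b ∈ S, G.Adj a b := by
  have key : ∀ (a b : V) (p : G.Walk a b), a ∈ D → b ∈ S → ∃ x ∈ D, ∃ y ∈ S, G.Adj x y := by
    intro a b p
    induction p with
    | nil => exact fun ha hb => absurd hb (hD.1 ha)
    | @cons a x b h p ih =>
        intro ha hb
        by_cases hx : x ∈ S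
        · exact ⟨a, ha, x, hx, h⟩
        · exact ih (hD.2.2 _ ha _ hx h) hb
  obtain ⟨p⟩ := hG.preconnected u v
  exact key _ _ p hu hv

lemma isCompOf_self {S : Set V} (hS : (G.induce S).Connected) : IsCompOf G S S :=
  ⟨Set.Subset.rfl, hS, fun _ _ v hv _ => hv⟩

end aux



theorem nice_Wmin_approx {V : Type*} [Fintype V] (G : SimpleGraph V) (hT : G.IsTree)
    (w : V → ℕ) (hw : 0 < setWeight w Set.univ)
    (wmax : ℕ) (hwmax : wmax = ⨆ u, w u)
    (Nice : ℕ → Prop)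
    (hNice : ∀ W : ℕ, Nice W ↔ ∃ S : Set V, S.Nonempty ∧ (G.induce S).Connected ∧
        W ≤ setWeight w S ∧ setWeight w S ≤ W + wmax ∧
        ∀ D : Set V, IsCompOf G Sᶜ D → setWeight w D ≤ W)
    (Wmin : ℕ) (hWmin : Wmin = sInf {W | Nice W}) :
    Wmin ≤ connSafeNum G w ∧ connSafeNum G w ≤ Wmin + wmax ∧
      Wmin + wmax ≤ 2 * connSafeNum G w := by
  classical
  have hGconn : G.Connected := hT.isConnected
  haveI hVne : Nonempty V := by
    by_contra h
    rw [not_nonempty_iff] at h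
    rw [Set.univ_eq_empty_iff.2 h] at hw
    simp [setWeight] at hw
  have hunivconn : (G.induce (Set.univ : Set V)).Connected :=
    (SimpleGraph.induceUnivIso G).connected_iff.2 hGconn
  have hnocomp : ∀ D : Set V, IsCompOf G (Set.univ : Set V)ᶜ D → False := by
    intro D hD
    obtain ⟨⟨d, hd⟩⟩ := hD.2.1.nonempty
    have := hD.1 hd
    simp at this
  have huniv_safe : IsSafeSet G w Set.univ :=
    ⟨Set.univ_nonempty, fun C D hC hD _ => absurd hD (hnocomp D)⟩
  have hcs_mem : connSafeNum G w ∈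
      {m | ∃ S : Set V, IsSafeSet G w S ∧ (G.induce S).Connected ∧ setWeight w S = m} :=
    Nat.sInf_mem ⟨_, Set.univ, huniv_safe, hunivconn, rfl⟩
  obtain ⟨S₀, hS₀safe, hS₀conn, hS₀w⟩ := hcs_mem
  have hS₀ne : S₀.Nonempty := hS₀safe.1
  have hcomp₀ : ∀ D, IsCompOf G S₀ᶜ D → setWeight w D ≤ connSafeNum G w := by
    intro D hD
    obtain ⟨⟨d, hd⟩⟩ := hD.2.1.nonempty
    obtain ⟨v, hv⟩ := hS₀ne
    obtain ⟨a, ha, b, hb, hab⟩ := exists_crossing hGconn hD hd hv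
    have := hS₀safe.2 S₀ D (isCompOf_self hS₀conn) hD ⟨b, hb, a, ha, hab.symm⟩
    omega
  have h1 : Wmin ≤ connSafeNum G w := by
    rw [hWmin]
    exact Nat.sInf_le ((hNice _).2
      ⟨S₀, hS₀ne, hS₀conn, le_of_eq hS₀w.symm, by omega, hcomp₀⟩)
  have hNice_total : Nice (setWeight w Set.univ) :=
    (hNice _).2 ⟨Set.univ, Set.univ_nonempty, hunivconn, le_rfl, Nat.le_add_right _ _,
      fun D hD => absurd hD (hnocomp D)⟩
  have hWmin_mem : Nice Wmin := by
    rw [hWmin]; exact Nat.sInf_mem ⟨_, hNice_total⟩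
  obtain ⟨S₁, hS₁ne, hS₁conn, hW1, hW2, hcompW⟩ := (hNice _).1 hWmin_mem
  have hS₁safe : IsSafeSet G w S₁ := by
    refine ⟨hS₁ne, fun C D hC hD _ => ?_⟩
    rw [isCompOf_eq_self hS₁conn hC]
    exact le_trans (hcompW D hD) hW1
  have h2 : connSafeNum G w ≤ Wmin + wmax :=
    le_trans (Nat.sInf_le ⟨S₁, hS₁safe, hS₁conn, rfl⟩) hW2
  have hwmax_le : wmax ≤ connSafeNum G w := by
    have hmem : wmax ∈ Set.range w := by
      rw [hwmax, iSup]
      exact Set.Nonempty.csSup_mem (Set.range_nonempty w) (Set.finite_range w)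
    obtain ⟨u, hu⟩ := hmem
    by_cases huS : u ∈ S₀
    · calc wmax = w u := hu.symm
        _ ≤ setWeight w S₀ := le_setWeight w huS
        _ = _ := hS₀w
    · have huD : u ∈ comp G S₀ᶜ u := comp_self huS
      have h3 := hcomp₀ _ (comp_isCompOf (G := G) (X := S₀ᶜ) (u := u) huS)
      have h4 := le_setWeight w huD
      omega
  exact ⟨h1, h2, by omega⟩
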